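/- The move H4 is derivable from the homotopy moves: for all words x, y, z and every letter A not occurring in x, y, z, the word xAByABz is homotopic to xyz, where homotopy is the equivalence relation generated by isomorphism and the moves H1: xAAy ↔ xy, H2: xAByBAz ↔ xyz, H3: xAByACzBCt ↔ xBAyCAzCBt. -/
import Mathlib


/-- A Gauss word: every letter that occurs, occurs exactly twice. -/
def IsGauss (w : List ℕ) : Prop := ∀ a ∈ w, w.count a = 2

/-- Rank of a word: the number of distinct letters occurring in it. -/
def rank (w : List ℕ) : ℕ := w.dedup.length

/-- Two words are isomorphic if one is obtained from the other by an
injective (hence bijective onto its image) relabeling of letters. -/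
def Isomorphic (w₁ w₂ : List ℕ) : Prop :=
  ∃ f : ℕ → ℕ, Function.Injective f ∧ w₂ = w₁.map f

/-- One step: an isomorphism or a homotopy move H1, H2, H3. -/
inductive Move : List ℕ → List ℕ → Prop
  | iso {w₁ w₂ : List ℕ} : Isomorphic w₁ w₂ → Move w₁ w₂
  | h1 (x y : List ℕ) (A : ℕ) (hA : A ∉ x ++ y) :
      Move (x ++ [A, A] ++ y) (x ++ y)
  | h2 (x y z : List ℕ) (A B : ℕ) (hAB : A ≠ B)
      (hA : A ∉ x ++ y ++ z) (hB : B ∉ x ++ y ++ z) :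
      Move (x ++ [A, B] ++ y ++ [B, A] ++ z) (x ++ y ++ z)
  | h3 (x y z t : List ℕ) (A B C : ℕ)
      (hAB : A ≠ B) (hAC : A ≠ C) (hBC : B ≠ C)
      (hA : A ∉ x ++ y ++ z ++ t) (hB : B ∉ x ++ y ++ z ++ t)
      (hC : C ∉ x ++ y ++ z ++ t) :
      Move (x ++ [A, B] ++ y ++ [A, C] ++ z ++ [B, C] ++ t)
           (x ++ [B, A] ++ y ++ [C, A] ++ z ++ [C, B] ++ t)

/-- Homotopy: the equivalence relation generated by isomorphisms and H1–H3. -/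
def Homotopic : List ℕ → List ℕ → Prop := Relation.EqvGen Move

lemma le_foldr_max {l : List ℕ} {a : ℕ} (h : a ∈ l) : a ≤ l.foldr max 0 := by
  induction l with
  | nil => simp at h
  | cons b t ih =>
    rcases List.mem_cons.mp h with rfl | h
    · exact le_max_left _ _
    · exact le_trans (ih h) (le_max_right _ _)

/-- H4 is derivable: xAByABz is homotopic to xyz. -/
theorem h4_derivable (x y z : List ℕ) (A B : ℕ) (hAB : A ≠ B)
    (hA : A ∉ x ++ y ++ z) (hB : B ∉ x ++ y ++ z) :
    Homotopic (x ++ [A, B] ++ y ++ [A, B] ++ z) (x ++ y ++ z) := by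
  simp only [List.mem_append, not_or] at hA hB
  obtain ⟨⟨hAx, hAy⟩, hAz⟩ := hA
  obtain ⟨⟨hBx, hBy⟩, hBz⟩ := hB
  set M : ℕ := (A :: B :: (x ++ y ++ z)).foldr max 0 with hM
  have hAM : A ≤ M := le_foldr_max (by simp)
  have hBM : B ≤ M := le_foldr_max (by simp)
  have hxM : ∀ a ∈ x, a ≤ M := fun a ha => le_foldr_max (by simp [ha])
  have hyM : ∀ a ∈ y, a ≤ M := fun a ha => le_foldr_max (by simp [ha])
  have hzM : ∀ a ∈ z, a ≤ M := fun a ha => le_foldr_max (by simp [ha])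
  set C := M + 1 with hC
  set D := M + 2 with hD
  set E := M + 3 with hE
  set F := M + 4 with hF
  have fx : ∀ n, M < n → n ∉ x := fun n hn hm => absurd (hxM _ hm) (by omega)
  have fy : ∀ n, M < n → n ∉ y := fun n hn hm => absurd (hyM _ hm) (by omega)
  have fz : ∀ n, M < n → n ∉ z := fun n hn hm => absurd (hzM _ hm) (by omega)
  have hCx : C ∉ x := fx _ (by omega)
  have hCy : C ∉ y := fy _ (by omega)
  have hCz : C ∉ z := fz _ (by omega)
  have hDx : D ∉ x := fx _ (by omega)
  have hDy : D ∉ y := fy _ (by omega)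
  have hDz : D ∉ z := fz _ (by omega)
  have hEx : E ∉ x := fx _ (by omega)
  have hEy : E ∉ y := fy _ (by omega)
  have hEz : E ∉ z := fz _ (by omega)
  have hFx : F ∉ x := fx _ (by omega)
  have hFy : F ∉ y := fy _ (by omega)
  have hFz : F ∉ z := fz _ (by omega)
  -- intermediate words
  have m1 : Move (x ++ C :: D :: A :: B :: D :: C :: (y ++ A :: B :: z))
                 (x ++ A :: B :: (y ++ A :: B :: z)) := by
    have h := Move.h2 x [A, B] (y ++ A :: B :: z) C D (by omega)
      (by simp only [List.mem_append, List.mem_cons, List.not_mem_nil, or_false, not_or]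
          and_intros <;> first | assumption | omega)
      (by simp only [List.mem_append, List.mem_cons, List.not_mem_nil, or_false, not_or]
          and_intros <;> first | assumption | omega)
    simpa [List.append_assoc] using h
  have m2 : Move (x ++ C :: E :: F :: D :: A :: B :: D :: C :: (y ++ A :: B :: F :: E :: z))
                 (x ++ C :: D :: A :: B :: D :: C :: (y ++ A :: B :: z)) := by
    have h := Move.h2 (x ++ [C]) ([D, A, B, D, C] ++ y ++ [A, B]) z E F (by omega)
      (by simp only [List.mem_append, List.mem_cons, List.not_mem_nil, or_false, not_or]
          and_intros <;> first | assumption | omega)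
      (by simp only [List.mem_append, List.mem_cons, List.not_mem_nil, or_false, not_or]
          and_intros <;> first | assumption | omega)
    simpa [List.append_assoc] using h
  have m3 : Move (x ++ C :: E :: D :: F :: A :: D :: B :: C :: (y ++ A :: F :: B :: E :: z))
                 (x ++ C :: E :: F :: D :: A :: B :: D :: C :: (y ++ A :: B :: F :: E :: z)) := by
    have h := Move.h3 (x ++ [C, E]) [A] ([C] ++ y ++ [A]) ([E] ++ z) D F B
      (by omega) (by omega) (by omega)
      (by simp only [List.mem_append, List.mem_cons, List.not_mem_nil, or_false, not_or]
          and_intros <;> first | assumption | omega)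
      (by simp only [List.mem_append, List.mem_cons, List.not_mem_nil, or_false, not_or]
          and_intros <;> first | assumption | omega)
      (by simp only [List.mem_append, List.mem_cons, List.not_mem_nil, or_false, not_or]
          and_intros <;> first | assumption | omega)
    simpa [List.append_assoc] using h
  have m4 : Move (x ++ C :: E :: D :: F :: A :: D :: B :: C :: (y ++ A :: F :: B :: E :: z))
                 (x ++ C :: E :: D :: D :: B :: C :: (y ++ B :: E :: z)) := by
    have h := Move.h2 (x ++ [C, E, D]) ([D, B, C] ++ y) ([B, E] ++ z) F A (by omega)
      (by simp only [List.mem_append, List.mem_cons, List.not_mem_nil, or_false, not_or]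
          and_intros <;> first | assumption | omega)
      (by simp only [List.mem_append, List.mem_cons, List.not_mem_nil, or_false, not_or]
          and_intros <;> first | assumption | omega)
    simpa [List.append_assoc] using h
  have m5 : Move (x ++ C :: E :: D :: D :: B :: C :: (y ++ B :: E :: z))
                 (x ++ C :: E :: B :: C :: (y ++ B :: E :: z)) := by
    have h := Move.h1 (x ++ [C, E]) ([B, C] ++ y ++ [B, E] ++ z) D
      (by simp only [List.mem_append, List.mem_cons, List.not_mem_nil, or_false, not_or]
          and_intros <;> first | assumption | omega)
    simpa [List.append_assoc] using h
  have m6 : Move (x ++ C :: E :: B :: C :: (y ++ B :: E :: z))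
                 (x ++ C :: C :: (y ++ z)) := by
    have h := Move.h2 (x ++ [C]) ([C] ++ y) z E B (by omega)
      (by simp only [List.mem_append, List.mem_cons, List.not_mem_nil, or_false, not_or]
          and_intros <;> first | assumption | omega)
      (by simp only [List.mem_append, List.mem_cons, List.not_mem_nil, or_false, not_or]
          and_intros <;> first | assumption | omega)
    simpa [List.append_assoc] using h
  have m7 : Move (x ++ C :: C :: (y ++ z)) (x ++ (y ++ z)) := by
    have h := Move.h1 x (y ++ z) C
      (by simp only [List.mem_append, not_or]; exact ⟨hCx, hCy, hCz⟩)
    simpa [List.append_assoc] using h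
  have goal' : Homotopic (x ++ A :: B :: (y ++ A :: B :: z)) (x ++ (y ++ z)) := by
    refine Relation.EqvGen.trans _ _ _ (Relation.EqvGen.symm _ _ (Relation.EqvGen.rel _ _ m1)) ?_
    refine Relation.EqvGen.trans _ _ _ (Relation.EqvGen.symm _ _ (Relation.EqvGen.rel _ _ m2)) ?_
    refine Relation.EqvGen.trans _ _ _ (Relation.EqvGen.symm _ _ (Relation.EqvGen.rel _ _ m3)) ?_
    refine Relation.EqvGen.trans _ _ _ (Relation.EqvGen.rel _ _ m4) ?_
    refine Relation.EqvGen.trans _ _ _ (Relation.EqvGen.rel _ _ m5) ?_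
    refine Relation.EqvGen.trans _ _ _ (Relation.EqvGen.rel _ _ m6) ?_
    exact Relation.EqvGen.rel _ _ m7
  simpa [List.append_assoc] using goal'
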